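/- In the setting of Problem 1, let (x_n)_{n∈ℕ} be a sequence generated by Algorithm 1. Then for every μ > 0 one has (f+g)(x_{n+1}) + M_1‖x_n − x_{n+1}‖² ≤ (f+g)(x_n) + M_2‖x_{n−1} − x_n‖² for all n ≥ 1, where M_1 = (σ − ᾱL_{∇g})/(2ᾱ) − μβ/(2α̲) and M_2 = β/(2μα̲). -/

import Mathlib

open Filter Topology RealInnerProductSpace

set_option maxHeartbeats 1600000
noncomputable section

variable {E : Type*} [NormedAddCommGroup E] [InnerProductSpace ℝ E]

/-- The Fréchet (viscosity) subdifferential of an extended-real-valued function `h` at `x`: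
`v` belongs to it iff `x ∈ dom h` and
`liminf_{y → x} (h y - h x - ⟪v, y - x⟫)/‖y - x‖ ≥ 0`, expressed equivalently by the
epsilon-characterization of the liminf. -/
def frechetSubdiff (h : E → EReal) (x : E) : Set E :=
  {v | h x ≠ ⊤ ∧ ∀ ε : ℝ, 0 < ε →
    ∀ᶠ y in 𝓝 x, (((h x).toReal + ⟪v, y - x⟫ - ε * ‖y - x‖ : ℝ) : EReal) ≤ h y}

/-- The limiting (Mordukhovich) subdifferential of `h` at `x`. -/
def limitingSubdiff (h : E → EReal) (x : E) : Set E :=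
  {v | h x ≠ ⊤ ∧ ∃ xk vk : ℕ → E,
    Tendsto xk atTop (𝓝 x) ∧
    Tendsto (fun k => h (xk k)) atTop (𝓝 (h x)) ∧
    (∀ k, vk k ∈ frechetSubdiff h (xk k)) ∧
    Tendsto vk atTop (𝓝 v)}


section Aux
variable [CompleteSpace E]

lemma myHasDerivAt_comp_line {g : E → ℝ} (hg : Differentiable ℝ g) (v Δ : E) (s : ℝ) :
    HasDerivAt (fun t : ℝ => g (v + t • Δ)) ⟪gradient g (v + s • Δ), Δ⟫ s := by
  have hc : HasDerivAt (fun t : ℝ => v + t • Δ) Δ s := by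
    simpa using ((hasDerivAt_id s).smul_const Δ).const_add v
  have hF : HasFDerivAt g (InnerProductSpace.toDual ℝ E (gradient g (v + s • Δ))) (v + s • Δ) :=
    hasGradientAt_iff_hasFDerivAt.mp (hg (v + s • Δ)).hasGradientAt
  have h := hF.comp_hasDerivAt s hc
  rw [InnerProductSpace.toDual_apply_apply] at h
  exact h

lemma myDescent {g : E → ℝ} {Lg : ℝ} (hLg : 0 ≤ Lg) (hg : Differentiable ℝ g)
    (hlip : ∀ z w, ‖gradient g z - gradient g w‖ ≤ Lg * ‖z - w‖) (p q : E) :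
    g q ≤ g p + ⟪gradient g p, q - p⟫ + Lg / 2 * ‖q - p‖ ^ 2 := by
  set Δ := q - p with hΔ
  have hgc : Continuous (gradient g) := by
    have : LipschitzWith (Real.toNNReal Lg) (gradient g) :=
      LipschitzWith.of_dist_le_mul (fun z w => by
        simpa [dist_eq_norm, Real.coe_toNNReal Lg hLg] using hlip z w)
    exact this.continuous
  have hcont : Continuous (fun t : ℝ => ⟪gradient g (p + t • Δ), Δ⟫) := by
    exact (hgc.comp (by continuity)).inner continuous_const
  have heq : g q - g p = ∫ t in (0:ℝ)..1, ⟪gradient g (p + t • Δ), Δ⟫ := by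
    have h := intervalIntegral.integral_eq_sub_of_hasDerivAt
      (f := fun t : ℝ => g (p + t • Δ))
      (fun s _ => myHasDerivAt_comp_line hg p Δ s) (hcont.intervalIntegrable 0 1)
    simp only [one_smul, zero_smul, add_zero] at h
    rw [h, hΔ, add_sub_cancel]
  have hcont2 : Continuous (fun t : ℝ => ⟪gradient g p, Δ⟫ + Lg * ‖Δ‖ ^ 2 * t) := by continuity
  have hbound : (∫ t in (0:ℝ)..1, ⟪gradient g (p + t • Δ), Δ⟫)
      ≤ ∫ t in (0:ℝ)..1, (⟪gradient g p, Δ⟫ + Lg * ‖Δ‖ ^ 2 * t) := by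
    apply intervalIntegral.integral_mono_on zero_le_one (hcont.intervalIntegrable 0 1)
      (hcont2.intervalIntegrable 0 1)
    intro t ht
    have h1 : ⟪gradient g (p + t • Δ) - gradient g p, Δ⟫
        ≤ ‖gradient g (p + t • Δ) - gradient g p‖ * ‖Δ‖ := real_inner_le_norm _ _
    have h2 : ‖gradient g (p + t • Δ) - gradient g p‖ ≤ Lg * ‖t • Δ‖ := by
      simpa using hlip (p + t • Δ) p
    have h3 : ‖t • Δ‖ = t * ‖Δ‖ := by
      rw [norm_smul, Real.norm_eq_abs, abs_of_nonneg ht.1]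
    have h4 : ⟪gradient g (p + t • Δ) - gradient g p, Δ⟫
        = ⟪gradient g (p + t • Δ), Δ⟫ - ⟪gradient g p, Δ⟫ := inner_sub_left _ _ _
    rw [h3] at h2
    nlinarith [mul_le_mul_of_nonneg_right h2 (norm_nonneg Δ), norm_nonneg Δ]
  have hint : (∫ t in (0:ℝ)..1, (⟪gradient g p, Δ⟫ + Lg * ‖Δ‖ ^ 2 * t))
      = ⟪gradient g p, Δ⟫ + Lg * ‖Δ‖ ^ 2 / 2 := by
    rw [intervalIntegral.integral_add (intervalIntegrable_const)
      (by exact (by continuity : Continuous fun t : ℝ => Lg * ‖Δ‖ ^ 2 * t).intervalIntegrable 0 1),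
      intervalIntegral.integral_const_mul, integral_id]
    simp; ring
  linarith [heq, hbound, hint]

lemma myStrong {F : E → ℝ} {σ : ℝ} (hF : Differentiable ℝ F)
    (hconv : ConvexOn ℝ Set.univ fun z => F z - σ / 2 * ‖z‖ ^ 2) (u v : E) :
    F v + ⟪gradient F v, u - v⟫ + σ / 2 * ‖u - v‖ ^ 2 ≤ F u := by
  set Δ := u - v with hΔ
  set φ : ℝ → ℝ := fun t => F (v + t • Δ) - σ / 2 * ‖v + t • Δ‖ ^ 2 with hφ
  have hder : HasDerivAt φ (⟪gradient F v, Δ⟫ - σ * ⟪v, Δ⟫) 0 := by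
    have h1 : HasDerivAt (fun t : ℝ => F (v + t • Δ)) ⟪gradient F (v + (0:ℝ) • Δ), Δ⟫ 0 :=
      myHasDerivAt_comp_line hF v Δ 0
    simp only [zero_smul, add_zero] at h1
    have h2 : HasDerivAt (fun t : ℝ => σ / 2 * ‖v + t • Δ‖ ^ 2) (σ * ⟪v, Δ⟫) 0 := by
      have hq : (fun t : ℝ => σ / 2 * ‖v + t • Δ‖ ^ 2)
          = fun t : ℝ => σ / 2 * (‖Δ‖ ^ 2 * t ^ 2 + 2 * ⟪v, Δ⟫ * t + ‖v‖ ^ 2) := by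
        funext t
        rw [norm_add_sq_real, real_inner_smul_right, norm_smul, Real.norm_eq_abs,
          mul_pow, sq_abs]
        ring
      rw [hq]
      have hb : HasDerivAt (fun t : ℝ => ‖Δ‖ ^ 2 * t ^ 2 + 2 * ⟪v, Δ⟫ * t + ‖v‖ ^ 2)
          (2 * ⟪v, Δ⟫) 0 := by
        have ha : HasDerivAt (fun t : ℝ => t ^ 2) (2 * (0:ℝ) ^ 1) 0 := hasDerivAt_pow 2 0
        have := ((ha.const_mul (‖Δ‖ ^ 2)).add
          ((hasDerivAt_id (0:ℝ)).const_mul (2 * ⟪v, Δ⟫))).add_const (‖v‖ ^ 2)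
        simpa using this
      have h2' := hb.const_mul (σ / 2)
      have he : σ / 2 * (2 * ⟪v, Δ⟫) = σ * ⟪v, Δ⟫ := by ring
      rw [he] at h2'
      exact h2'
    exact h1.sub h2
  have hslope : ∀ t ∈ Set.Ioo (0:ℝ) 1,
      (φ t - φ 0) / (t - 0) ≤ (F u - σ / 2 * ‖u‖ ^ 2) - (F v - σ / 2 * ‖v‖ ^ 2) := by
    intro t ht
    have hc := hconv.2 (Set.mem_univ v) (Set.mem_univ u)
      (show (0:ℝ) ≤ 1 - t by linarith [ht.2]) ht.1.le (show (1 - t) + t = 1 by ring)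
    have harg : (1 - t) • v + t • u = v + t • Δ := by
      rw [hΔ]; module
    rw [harg] at hc
    have hφ0 : φ 0 = F v - σ / 2 * ‖v‖ ^ 2 := by simp [hφ]
    rw [sub_zero, div_le_iff₀ ht.1]
    simp only [hφ, zero_smul, add_zero, smul_eq_mul] at hc ⊢
    nlinarith [hc]
  have T : Tendsto (slope φ 0) (𝓝[>] 0) (𝓝 (⟪gradient F v, Δ⟫ - σ * ⟪v, Δ⟫)) :=
    (hasDerivAt_iff_tendsto_slope.mp hder).mono_left
      (nhdsWithin_mono 0 (fun t ht => ne_of_gt ht))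
  have hle : ⟪gradient F v, Δ⟫ - σ * ⟪v, Δ⟫
      ≤ (F u - σ / 2 * ‖u‖ ^ 2) - (F v - σ / 2 * ‖v‖ ^ 2) := by
    refine le_of_tendsto T ?_
    filter_upwards [Ioo_mem_nhdsGT (by norm_num : (0:ℝ) < 1)] with t ht
    have := hslope t ht
    simpa [slope_def_field] using this
  have hinner : ⟪v, Δ⟫ = ⟪v, u⟫ - ‖v‖ ^ 2 := by
    rw [hΔ, inner_sub_right, real_inner_self_eq_norm_sq]
  have hexp : ‖Δ‖ ^ 2 = ‖u‖ ^ 2 - 2 * ⟪v, u⟫ + ‖v‖ ^ 2 := by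
    rw [hΔ, norm_sub_sq_real, real_inner_comm]
  rw [hexp]
  rw [hinner] at hle
  nlinarith [hle]

end Aux

/-- Lemma 3.1, first part: a sufficient decrease inequality for the iterates of
Algorithm 1. For every `μ > 0` and `n ≥ 1`,
`(f+g)(x_{n+1}) + M1‖x_n - x_{n+1}‖² ≤ (f+g)(x_n) + M2‖x_{n-1} - x_n‖²`
with `M1 = (σ - αhi·Lg)/(2αhi) - μβ/(2αlo)` and `M2 = β/(2μαlo)`. -/
theorem stmt4
    (m : ℕ)
    (f : EuclideanSpace ℝ (Fin m) → EReal)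
    -- `f` is proper (never `⊥`, somewhere finite), lower semicontinuous and bounded below
    (hfbot : ∀ z, f z ≠ ⊥) (hfproper : ∃ z, f z ≠ ⊤)
    (hflsc : LowerSemicontinuous f)
    (hfbdd : ∃ cl : ℝ, ∀ z, (cl : EReal) ≤ f z)
    -- `g` is differentiable with `Lg`-Lipschitz gradient
    (g : EuclideanSpace ℝ (Fin m) → ℝ) (Lg : ℝ) (hLg : 0 ≤ Lg)
    (hgdiff : Differentiable ℝ g)
    (hglip : ∀ z w, ‖gradient g z - gradient g w‖ ≤ Lg * ‖z - w‖)
    -- `F` is `σ`-strongly convex and differentiable with `LF`-Lipschitz gradient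
    (F : EuclideanSpace ℝ (Fin m) → ℝ) (σ LF : ℝ) (hσ : 0 < σ) (hLF : 0 < LF)
    (hFconv : ConvexOn ℝ Set.univ fun z => F z - σ / 2 * ‖z‖ ^ 2)
    (hFdiff : Differentiable ℝ F)
    (hFlip : ∀ z w, ‖gradient F z - gradient F w‖ ≤ LF * ‖z - w‖)
    -- parameters of the algorithm
    (αlo αhi β : ℝ) (hαlo : 0 < αlo) (hαorder : αlo ≤ αhi) (hβ : 0 ≤ β)
    (α βs : ℕ → ℝ)
    (hα : ∀ n, 1 ≤ n → αlo ≤ α n ∧ α n ≤ αhi)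
    (hβs : ∀ n, 1 ≤ n → 0 ≤ βs n ∧ βs n ≤ β)
    -- the sequence generated by Algorithm 1:
    -- `x (n+1)` minimizes `u ↦ D_F(u, x n) + α n • ⟪u, ∇g(x n)⟫ + βs n • ⟪u, x (n-1) - x n⟫ + α n • f u`
    (x : ℕ → EuclideanSpace ℝ (Fin m))
    (halg : ∀ n, 1 ≤ n → ∀ u,
      ((F (x (n + 1)) - F (x n) - ⟪gradient F (x n), x (n + 1) - x n⟫
          + α n * ⟪x (n + 1), gradient g (x n)⟫
          + βs n * ⟪x (n + 1), x (n - 1) - x n⟫ : ℝ) : EReal)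
        + (α n : EReal) * f (x (n + 1))
      ≤ ((F u - F (x n) - ⟪gradient F (x n), u - x n⟫
          + α n * ⟪u, gradient g (x n)⟫
          + βs n * ⟪u, x (n - 1) - x n⟫ : ℝ) : EReal)
        + (α n : EReal) * f u)
    :
    ∀ μ : ℝ, 0 < μ → ∀ n, 1 ≤ n →
      f (x (n + 1)) + ((g (x (n + 1))
          + ((σ - αhi * Lg) / (2 * αhi) - μ * β / (2 * αlo)) * ‖x n - x (n + 1)‖ ^ 2 : ℝ) : EReal)
      ≤ f (x n) + ((g (x n)
          + (β / (2 * μ * αlo)) * ‖x (n - 1) - x n‖ ^ 2 : ℝ) : EReal) := by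
    intro μ hμ n hn
    have hαhi : 0 < αhi := lt_of_lt_of_le hαlo hαorder
    obtain ⟨hαnlo, hαnhi⟩ := hα n hn
    obtain ⟨hβn0, hβnb⟩ := hβs n hn
    have hαn : 0 < α n := lt_of_lt_of_le hαlo hαnlo
    by_cases htn : f (x n) = ⊤
    · rw [htn, EReal.top_add_coe]; exact le_top
    have hbn : f (x n) ≠ ⊥ := hfbot _
    have hfb : f (x n) = ((f (x n)).toReal : EReal) := (EReal.coe_toReal htn hbn).symm
    set b := (f (x n)).toReal with hbdef
    have halg' := halg n hn (x n)
    by_cases htn1 : f (x (n + 1)) = ⊤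
    · exfalso
      rw [htn1, hfb] at halg'
      rw [EReal.coe_mul_top_of_pos (by exact_mod_cast hαn), EReal.coe_add_top,
        ← EReal.coe_mul, ← EReal.coe_add, top_le_iff] at halg'
      exact EReal.coe_ne_top _ halg'
    have hbn1 : f (x (n + 1)) ≠ ⊥ := hfbot _
    have hfa : f (x (n + 1)) = ((f (x (n + 1))).toReal : EReal) :=
      (EReal.coe_toReal htn1 hbn1).symm
    set a := (f (x (n + 1))).toReal with hadef
    rw [hfa, hfb] at halg' ⊢
    rw [← EReal.coe_mul, ← EReal.coe_mul, ← EReal.coe_add, ← EReal.coe_add,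
      EReal.coe_le_coe_iff] at halg'
    rw [← EReal.coe_add, ← EReal.coe_add, EReal.coe_le_coe_iff]
    -- real arithmetic from here on
    have hz : ⟪gradient F (x n), x n - x n⟫ = (0 : ℝ) := by simp
    have hstrong := myStrong hFdiff hFconv (x (n + 1)) (x n)
    have hdesc := myDescent hLg hgdiff hglip (x n) (x (n + 1))
    have e1 : ⟪x (n + 1), gradient g (x n)⟫ - ⟪x n, gradient g (x n)⟫
        = ⟪gradient g (x n), x (n + 1) - x n⟫ := by
      rw [← inner_sub_left]; exact real_inner_comm _ _
    have e2 : ⟪x (n + 1), x (n - 1) - x n⟫ - ⟪x n, x (n - 1) - x n⟫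
        = ⟪x (n + 1) - x n, x (n - 1) - x n⟫ := (inner_sub_left _ _ _).symm
    have e1' : α n * ⟪x (n + 1), gradient g (x n)⟫
        = α n * ⟪x n, gradient g (x n)⟫ + α n * ⟪gradient g (x n), x (n + 1) - x n⟫ := by
      linear_combination (α n) * e1
    have e2' : βs n * ⟪x (n + 1), x (n - 1) - x n⟫
        = βs n * ⟪x n, x (n - 1) - x n⟫ + βs n * ⟪x (n + 1) - x n, x (n - 1) - x n⟫ := by
      linear_combination (βs n) * e2
    have h3 : -⟪x (n + 1) - x n, x (n - 1) - x n⟫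
        ≤ ‖x (n + 1) - x n‖ * ‖x (n - 1) - x n‖ := by
      have h := real_inner_le_norm (x n - x (n + 1)) (x (n - 1) - x n)
      have hne : ⟪x n - x (n + 1), x (n - 1) - x n⟫
          = -⟪x (n + 1) - x n, x (n - 1) - x n⟫ := by
        rw [← inner_neg_left]; congr 1; abel
      rw [hne, norm_sub_rev] at h
      exact h
    have h4 : ‖x (n + 1) - x n‖ * ‖x (n - 1) - x n‖
        ≤ μ / 2 * ‖x (n + 1) - x n‖ ^ 2 + 1 / (2 * μ) * ‖x (n - 1) - x n‖ ^ 2 := by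
      rw [← sub_nonneg]
      have key : μ / 2 * ‖x (n + 1) - x n‖ ^ 2 + 1 / (2 * μ) * ‖x (n - 1) - x n‖ ^ 2
          - ‖x (n + 1) - x n‖ * ‖x (n - 1) - x n‖
          = 1 / (2 * μ) * (μ * ‖x (n + 1) - x n‖ - ‖x (n - 1) - x n‖) ^ 2 := by
        field_simp
        ring
      rw [key]
      positivity
    have t2 := mul_le_mul_of_nonneg_left hdesc hαn.le
    have t3 := mul_le_mul_of_nonneg_left h3 hβn0
    have t4 := mul_le_mul_of_nonneg_left h4 hβn0
    have h5 : α n * (a + g (x (n + 1)))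
        + (σ / 2 - α n * Lg / 2 - βs n * μ / 2) * ‖x (n + 1) - x n‖ ^ 2
        ≤ α n * (b + g (x n)) + βs n * (1 / (2 * μ)) * ‖x (n - 1) - x n‖ ^ 2 := by
      linarith [halg', hstrong, hz, e1', e2', t2, t3, t4]
    have c1 : α n * ((σ - αhi * Lg) / (2 * αhi) - μ * β / (2 * αlo))
        ≤ σ / 2 - α n * Lg / 2 - βs n * μ / 2 := by
      have d1 : α n * ((σ - αhi * Lg) / (2 * αhi)) ≤ σ / 2 - α n * Lg / 2 := by
        rw [mul_div_assoc', div_le_iff₀ (by positivity)]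
        nlinarith [mul_le_mul_of_nonneg_right hαnhi hσ.le]
      have d2 : βs n * μ / 2 ≤ α n * (μ * β / (2 * αlo)) := by
        rw [mul_div_assoc', le_div_iff₀ (by positivity)]
        nlinarith [mul_le_mul_of_nonneg_left hβnb (mul_nonneg hμ.le hαlo.le),
          mul_le_mul_of_nonneg_left hαnlo (mul_nonneg hμ.le hβ)]
      rw [mul_sub]
      linarith [d1, d2]
    have c2 : βs n * (1 / (2 * μ)) ≤ α n * (β / (2 * μ * αlo)) := by
      rw [mul_one_div, mul_div_assoc', div_le_div_iff₀ (by positivity) (by positivity)]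
      nlinarith [mul_le_mul_of_nonneg_left hβnb (mul_pos hμ hαlo).le,
        mul_le_mul_of_nonneg_left hαnlo (mul_nonneg hμ.le hβ)]
    have hc1P := mul_le_mul_of_nonneg_right c1 (sq_nonneg ‖x (n + 1) - x n‖)
    have hc2Q := mul_le_mul_of_nonneg_right c2 (sq_nonneg ‖x (n - 1) - x n‖)
    have hnr : ‖x n - x (n + 1)‖ = ‖x (n + 1) - x n‖ := norm_sub_rev _ _
    have H : α n * (a + (g (x (n + 1))
          + ((σ - αhi * Lg) / (2 * αhi) - μ * β / (2 * αlo)) * ‖x n - x (n + 1)‖ ^ 2))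
        ≤ α n * (b + (g (x n) + β / (2 * μ * αlo) * ‖x (n - 1) - x n‖ ^ 2)) := by
      rw [hnr]
      linarith [h5, hc1P, hc2Q]
    exact (mul_le_mul_iff_of_pos_left hαn).mp H
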